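/- Let G be a connected graph with minimum degree at least 2 and a feedback edge set of size at most k ≥ 1. Then G has at most 2k - 1 vertices of degree at least 3. -/

import Mathlib

open Finset SimpleGraph

lemma my_isAcyclic_mono {V : Type*} {H G : SimpleGraph V} (hle : H ≤ G)
    (hG : G.IsAcyclic) : H.IsAcyclic := by
  intro v c hc
  exact hG (c.mapLe hle) ((SimpleGraph.Walk.mapLe_isCycle hle).mpr hc)

/-- A forest on `n` vertices: edges + components ≤ n. -/
lemma my_forest_bound {V : Type*} [Fintype V] [DecidableEq V] (m : ℕ) :
    ∀ (H : SimpleGraph V) [DecidableRel H.Adj], H.edgeFinset.card ≤ m →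
      H.IsAcyclic → H.edgeFinset.card + Nat.card H.ConnectedComponent ≤ Fintype.card V := by
  induction m with
  | zero =>
    intro H _ hcard _
    have h0 : H.edgeFinset.card = 0 := Nat.le_zero.mp hcard
    have hsurj : Function.Surjective (H.connectedComponentMk) := by
      intro c
      exact c.ind (fun v => ⟨v, rfl⟩)
    have := Nat.card_le_card_of_surjective _ hsurj
    simpa [h0, Nat.card_eq_fintype_card] using this
  | succ m ih =>
    intro H _ hcard hacyc
    by_cases h0 : H.edgeFinset.card = 0
    · have hsurj : Function.Surjective (H.connectedComponentMk) := by
        intro c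
        exact c.ind (fun v => ⟨v, rfl⟩)
      have := Nat.card_le_card_of_surjective _ hsurj
      simpa [h0, Nat.card_eq_fintype_card] using this
    · obtain ⟨e, he⟩ := Finset.card_pos.mp (Nat.pos_of_ne_zero h0)
      obtain ⟨a, b, hab⟩ : ∃ a b, s(a, b) ∈ H.edgeSet :=
        Sym2.exists.mp ⟨e, SimpleGraph.mem_edgeFinset.mp he⟩
      rw [SimpleGraph.mem_edgeSet] at hab
      set H' := H.deleteEdges {s(a, b)} with hH'
      classical
      have hle : H' ≤ H := SimpleGraph.deleteEdges_le _
      have hacyc' : H'.IsAcyclic := my_isAcyclic_mono hle hacyc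
      -- edge count
      have hedges : H'.edgeFinset = H.edgeFinset.erase s(a, b) := by
        ext e
        simp only [hH', SimpleGraph.mem_edgeFinset, SimpleGraph.edgeSet_deleteEdges,
          Finset.mem_erase, Set.mem_diff, Set.mem_singleton_iff]
        tauto
      have hmem : s(a, b) ∈ H.edgeFinset := SimpleGraph.mem_edgeFinset.mpr hab
      have hcard' : H'.edgeFinset.card = H.edgeFinset.card - 1 := by
        rw [hedges, Finset.card_erase_of_mem hmem]
      have hpos : 1 ≤ H.edgeFinset.card := Nat.pos_of_ne_zero h0
      -- bridge: a and b not reachable in H'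
      have hbridge : H.IsBridge s(a, b) :=
        (SimpleGraph.isAcyclic_iff_forall_adj_isBridge.mp hacyc) hab
      have hnreach : ¬ H'.Reachable a b := by
        have := (SimpleGraph.isBridge_iff).mp hbridge
        exact this
      -- component count comparison
      let f : H'.ConnectedComponent → H.ConnectedComponent :=
        SimpleGraph.ConnectedComponent.map (SimpleGraph.Hom.ofLE hle)
      have hsurj : Function.Surjective f := by
        intro c
        exact c.ind (fun v => ⟨H'.connectedComponentMk v, rfl⟩)
      have hninj : ¬ Function.Injective f := by
        intro hinj
        have h1 : f (H'.connectedComponentMk a) = f (H'.connectedComponentMk b) := by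
          simp only [f, SimpleGraph.ConnectedComponent.map_mk]
          exact SimpleGraph.ConnectedComponent.connectedComponentMk_eq_of_adj hab
        have h2 := hinj h1
        exact hnreach (SimpleGraph.ConnectedComponent.eq.mp h2)
      have hcc : Nat.card H.ConnectedComponent < Nat.card H'.ConnectedComponent := by
        have : Fintype H'.ConnectedComponent := Fintype.ofFinite _
        have : Fintype H.ConnectedComponent := Fintype.ofFinite _
        simpa [Nat.card_eq_fintype_card] using
          Fintype.card_lt_of_surjective_not_injective f hsurj hninj
      have hIH := ih H' (by omega) hacyc'
      omega

/-- Let `G` be a connected graph with minimum degree at least 2 that has a feedback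
edge set of size at most `k ≥ 1` (a set `F` of edges such that `G - F` is acyclic).
Then `G` has at most `2k - 1` vertices of degree at least 3. -/
theorem stmt6 {V : Type*} [Fintype V] [DecidableEq V] (G : SimpleGraph V)
    [DecidableRel G.Adj] (k : ℕ) (hk : 1 ≤ k)
    (hconn : G.Connected) (hmin : ∀ v, 2 ≤ G.degree v)
    (F : Finset (Sym2 V)) (hFsub : ↑F ⊆ G.edgeSet) (hFcard : F.card ≤ k)
    (hacyc : (G.deleteEdges ↑F).IsAcyclic) :
    (Finset.univ.filter fun v => 3 ≤ G.degree v).card ≤ 2 * k - 1 := by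
  classical
  have hne : Nonempty V := hconn.nonempty
  set n := Fintype.card V with hn
  have hnpos : 1 ≤ n := Fintype.card_pos
  set T := G.deleteEdges ↑F with hT
  -- components of T: at least 1
  have hccpos : 1 ≤ Nat.card T.ConnectedComponent := by
    have : Nonempty T.ConnectedComponent := ⟨T.connectedComponentMk (Classical.arbitrary V)⟩
    exact Nat.card_pos
  -- forest bound on T
  have hTbound := my_forest_bound T.edgeFinset.card T le_rfl hacyc
  have hTedges : T.edgeFinset.card ≤ n - 1 := by omega
  -- edges of G split into T and F
  have hsplit : G.edgeFinset ⊆ T.edgeFinset ∪ F := by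
    intro e he
    rw [SimpleGraph.mem_edgeFinset] at he
    by_cases hF : e ∈ F
    · exact Finset.mem_union_right _ hF
    · refine Finset.mem_union_left _ ?_
      rw [SimpleGraph.mem_edgeFinset, hT, SimpleGraph.edgeSet_deleteEdges]
      exact ⟨he, hF⟩
  have hGedges : G.edgeFinset.card ≤ (n - 1) + k := by
    calc G.edgeFinset.card ≤ (T.edgeFinset ∪ F).card := Finset.card_le_card hsplit
      _ ≤ T.edgeFinset.card + F.card := Finset.card_union_le _ _
      _ ≤ (n - 1) + k := by omega
  -- degree sum
  have hsum : ∑ v, G.degree v = 2 * G.edgeFinset.card :=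
    SimpleGraph.sum_degrees_eq_twice_card_edges G
  set S := Finset.univ.filter fun v => 3 ≤ G.degree v with hS
  set S2 := Finset.univ.filter fun v => ¬ 3 ≤ G.degree v with hS2
  have hlower : 2 * n + S.card ≤ ∑ v, G.degree v := by
    have hsplitsum : ∑ v ∈ S, G.degree v + ∑ v ∈ S2, G.degree v = ∑ v, G.degree v :=
      Finset.sum_filter_add_sum_filter_not Finset.univ _ _
    have h1 : 3 * S.card ≤ ∑ v ∈ S, G.degree v := by
      rw [mul_comm, ← Finset.sum_const_nat fun v _ => rfl]
      exact Finset.sum_le_sum fun v hv => (Finset.mem_filter.mp hv).2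
    have h2 : 2 * S2.card ≤ ∑ v ∈ S2, G.degree v := by
      rw [mul_comm, ← Finset.sum_const_nat fun v _ => rfl]
      exact Finset.sum_le_sum fun v _ => hmin v
    have hcards : S.card + S2.card = n := by
      rw [hS, hS2, Finset.card_filter_add_card_filter_not, Finset.card_univ]
    omega
  omega
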